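/- Let L = ℤ^{r+1} with r ≥ 3, basis e₀,…,e_r, and bilinear form e₀·e₀ = 1, eᵢ·eᵢ = -1 for i ≥ 1, eᵢ·eⱼ = 0 for i ≠ j. Define h₀ = e₀, h₁ = e₀ - e₁, h₂ = 2e₀ - e₁ - e₂, and hᵢ = 3e₀ - e₁ - ⋯ - eᵢ for 3 ≤ i ≤ r. Suppose N = Σᵢ aᵢhᵢ with all aᵢ ≥ 0 integers, N·N = 0, N·h_r = 0, and N ≠ 0. Then r ≥ 9 and N = a₉·h₉ with a₉ > 0 (all other coefficients aᵢ for i ≠ 9 equal 0, after noting h₉ is the unique such combination up to positive multiple). -/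

import Mathlib

set_option maxHeartbeats 1000000 in
lemma core10 (r : ℕ) (n : ℤ) (c : ℕ → ℤ) (hr : 3 ≤ r) (hn : 1 ≤ n)
    (hpos : ∀ j, 0 ≤ c j) (hmono : ∀ j k, j ≤ k → c k ≤ c j)
    (hzero : ∀ j, r < j → c j = 0)
    (h123 : c 1 + c 2 + c 3 ≤ n)
    (hSc : ∑ j ∈ Finset.range r, c (j+1) = 3 * n)
    (hSq : ∑ j ∈ Finset.range r, (c (j+1))^2 = n^2) :
    9 ≤ r ∧ (∀ j, 1 ≤ j → j ≤ 9 → 3 * c j = n) ∧ (∀ j, 10 ≤ j → c j = 0) := by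
  have hsplit : ∀ f : ℕ → ℤ, (f 0 + f 1 + f 2) + ∑ j ∈ Finset.Ico 3 r, f j
      = ∑ j ∈ Finset.range r, f j := by
    intro f
    rw [← Finset.sum_range_add_sum_Ico f hr]
    rw [Finset.sum_range_succ, Finset.sum_range_succ, Finset.sum_range_one]
  -- c 3 ≥ 1
  have hc3 : 1 ≤ c 3 := by
    by_contra h
    have h3 : c 3 = 0 := le_antisymm (by omega) (hpos 3)
    have hA : ∑ j ∈ Finset.Ico 3 r, c (j+1) = 0 := by
      apply Finset.sum_eq_zero
      intro j hj
      have := hmono 3 (j+1) (by simp at hj; omega)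
      have := hpos (j+1)
      omega
    have h0 := hsplit (fun j => c (j+1))
    simp only [hA, add_zero] at h0
    rw [hSc] at h0
    norm_num at h0
    omega
  have hA0 : 0 ≤ ∑ j ∈ Finset.Ico 3 r, c (j+1) :=
    Finset.sum_nonneg (fun j _ => hpos _)
  have hQA : ∑ j ∈ Finset.Ico 3 r, (c (j+1))^2 ≤ c 3 * ∑ j ∈ Finset.Ico 3 r, c (j+1) := by
    rw [Finset.mul_sum]
    apply Finset.sum_le_sum
    intro j hj
    have h1 : c (j+1) ≤ c 3 := hmono 3 (j+1) (by simp at hj; omega)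
    have h2 : 0 ≤ c (j+1) := hpos _
    nlinarith
  have hQ0 : 0 ≤ ∑ j ∈ Finset.Ico 3 r, (c (j+1))^2 :=
    Finset.sum_nonneg (fun j _ => sq_nonneg _)
  have eSc : (c 1 + c 2 + c 3) + ∑ j ∈ Finset.Ico 3 r, c (j+1) = 3 * n := by
    have := hsplit (fun j => c (j+1)); rw [this, hSc]
  have eSq : (c 1 ^2 + c 2 ^2 + c 3 ^2) + ∑ j ∈ Finset.Ico 3 r, (c (j+1))^2 = n^2 := by
    have := hsplit (fun j => (c (j+1))^2); rw [this, hSq]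
  have h12 : c 2 ≤ c 1 := hmono 1 2 (by omega)
  have h23 : c 3 ≤ c 2 := hmono 2 3 (by omega)
  -- key: 3 c 1 ≤ n
  have hkey : 3 * c 1 ≤ n := by
    set A := ∑ j ∈ Finset.Ico 3 r, c (j+1) with hA
    set Q := ∑ j ∈ Finset.Ico 3 r, (c (j+1))^2 with hQ
    nlinarith [sq_nonneg (c 1 - c 2), sq_nonneg (c 2 - c 3), sq_nonneg (c 1 - c 3),
      sq_nonneg (3*c 1 - n), sq_nonneg (c 1 + c 2 + c 3 - n),
      mul_nonneg (sub_nonneg.2 h12) (sub_nonneg.2 h23)]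
  have hcb : ∀ j, 1 ≤ j → 3 * c j ≤ n := by
    intro j hj
    have := hmono 1 j hj
    omega
  -- each term of the null sum vanishes
  have hzero_sum : ∑ j ∈ Finset.range r, (c (j+1) * (n - 3 * c (j+1))) = 0 := by
    have expand : ∀ j ∈ Finset.range r, c (j+1) * (n - 3 * c (j+1))
        = n * c (j+1) - 3 * (c (j+1))^2 := by intro j _; ring
    rw [Finset.sum_congr rfl expand, Finset.sum_sub_distrib, ← Finset.mul_sum, ← Finset.mul_sum,
      hSc, hSq]
    ring
  have hdichot : ∀ j ∈ Finset.range r, c (j+1) = 0 ∨ 3 * c (j+1) = n := by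
    intro j hj
    have hterm : ∀ i ∈ Finset.range r, 0 ≤ c (i+1) * (n - 3 * c (i+1)) := by
      intro i _
      exact mul_nonneg (hpos _) (by have := hcb (i+1) (by omega); omega)
    have := (Finset.sum_eq_zero_iff_of_nonneg hterm).1 hzero_sum j hj
    rcases mul_eq_zero.1 this with h | h
    · left; exact h
    · right; omega
  have hub : ∀ m : ℕ, ∑ j ∈ Finset.range m, c (j+1) ≤ (m : ℤ) * c 1 := by
    intro m
    calc ∑ j ∈ Finset.range m, c (j+1) ≤ ∑ j ∈ Finset.range m, c 1 :=
          Finset.sum_le_sum (fun j _ => hmono 1 (j+1) (by omega))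
      _ = (m : ℤ) * c 1 := by rw [Finset.sum_const]; simp [mul_comm]
  have hr9 : 9 ≤ r := by
    have h1 := hub r
    rw [hSc] at h1
    by_contra h
    push_neg at h
    have hrle : (r : ℤ) ≤ 8 := by exact_mod_cast Nat.le_of_lt_succ h
    have e1 : (r:ℤ) * (3 * c 1) ≤ (r:ℤ) * n :=
      mul_le_mul_of_nonneg_left hkey (by positivity)
    have e2 : (r:ℤ) * n ≤ 8 * n :=
      mul_le_mul_of_nonneg_right hrle (by linarith)
    linarith
  -- c 9 = n/3
  have hc9 : 3 * c 9 = n := by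
    rcases hdichot 8 (Finset.mem_range.2 (by omega)) with h | h
    · exfalso
      have hrest : ∑ j ∈ Finset.Ico 8 r, c (j+1) = 0 := by
        apply Finset.sum_eq_zero
        intro j hj
        have h1 := hmono 9 (j+1) (by simp at hj; omega)
        have h2 := hpos (j+1)
        simp only [show (8:ℕ)+1 = 9 by rfl] at h
        omega
      have hsum : ∑ j ∈ Finset.range 8, c (j+1) = 3 * n := by
        have := Finset.sum_range_add_sum_Ico (fun j => c (j+1)) (show 8 ≤ r by omega)
        simp only [hrest, add_zero] at this
        rw [this]; exact hSc
      have h8 := hub 8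
      rw [hsum] at h8
      norm_num at h8
      linarith
    · exact h
  have hc9pos : 1 ≤ c 9 := by omega
  have hmid : ∀ j, 1 ≤ j → j ≤ 9 → 3 * c j = n := by
    intro j h1 h9
    rcases hdichot (j-1) (Finset.mem_range.2 (by omega)) with h | h
    · exfalso
      have hm := hmono j 9 h9
      have he : j - 1 + 1 = j := by omega
      rw [he] at h
      omega
    · have he : j - 1 + 1 = j := by omega
      rw [he] at h
      exact h
  refine ⟨hr9, hmid, ?_⟩
  have hfirst9 : ∑ j ∈ Finset.range 9, c (j+1) = 3 * n := by
    have hcongr : ∀ j ∈ Finset.range 9, c (j+1) = c 9 := by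
      intro j hj
      simp only [Finset.mem_range] at hj
      have := hmid (j+1) (by omega) (by omega)
      omega
    rw [Finset.sum_congr rfl hcongr, Finset.sum_const, Finset.card_range, nsmul_eq_mul]
    push_cast
    omega
  have htail : ∑ j ∈ Finset.Ico 9 r, c (j+1) = 0 := by
    have := Finset.sum_range_add_sum_Ico (fun j => c (j+1)) hr9
    rw [hfirst9, hSc] at this
    omega
  intro j hj
  rcases le_or_gt j r with hjr | hjr
  · have := (Finset.sum_eq_zero_iff_of_nonneg (fun i _ => hpos (i+1))).1 htail (j-1)
      (Finset.mem_Ico.2 ⟨by omega, by omega⟩)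
    have hj1 : j - 1 + 1 = j := by omega
    rw [hj1] at this
    exact this
  · exact hzero j hjr

/-- The bilinear form of signature (1,r) on ℤ^{r+1}: diag(1,-1,…,-1). -/
def B10 (r : ℕ) (x y : Fin (r + 1) → ℤ) : ℤ :=
  ∑ i : Fin (r + 1), (if i = 0 then x i * y i else -(x i * y i))

/-- The standard classes: h₀ = e₀, h₁ = e₀ - e₁, h₂ = 2e₀ - e₁ - e₂,
and hᵢ = 3e₀ - e₁ - ⋯ - eᵢ for i ≥ 3. -/
def hstd (r : ℕ) (i : Fin (r + 1)) : Fin (r + 1) → ℤ := fun j =>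
  if j.val = 0 then (max 1 (min i.val 3) : ℤ)
  else if j.val ≤ i.val then -1 else 0

theorem stmt10 (r : ℕ) (hr : 3 ≤ r) (a : Fin (r + 1) → ℤ)
    (ha : ∀ i, 0 ≤ a i)
    (N : Fin (r + 1) → ℤ) (hN : N = ∑ i : Fin (r + 1), a i • hstd r i)
    (hNN : B10 r N N = 0)
    (hNK : B10 r N (hstd r (Fin.last r)) = 0)
    (hN0 : N ≠ 0) :
    9 ≤ r ∧ (∀ i : Fin (r + 1), i.val = 9 → 0 < a i) ∧
      (∀ i : Fin (r + 1), i.val ≠ 9 → a i = 0) := by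
  classical
  set c : ℕ → ℤ := fun j => ∑ i : Fin (r+1), if j ≤ i.val then a i else 0 with hc
  -- coordinates of N
  have hNval : ∀ j : Fin (r+1), N j = ∑ i : Fin (r+1), a i * hstd r i j := by
    intro j
    rw [hN]
    simp [Finset.sum_apply]
  have hNj : ∀ j : Fin (r+1), j.val ≠ 0 → N j = -(c j.val) := by
    intro j hj
    rw [hNval j, hc]
    rw [← Finset.sum_neg_distrib]
    apply Finset.sum_congr rfl
    intro i _
    simp only [hstd, if_neg hj]
    by_cases h : j.val ≤ i.val <;> simp [h]
  -- properties of c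
  have hpos : ∀ j, 0 ≤ c j := by
    intro j
    exact Finset.sum_nonneg (fun i _ => by by_cases h : j ≤ i.val <;> simp [h, ha i])
  have hmono : ∀ j k : ℕ, j ≤ k → c k ≤ c j := by
    intro j k hjk
    apply Finset.sum_le_sum
    intro i _
    by_cases h : k ≤ i.val
    · rw [if_pos h, if_pos (le_trans hjk h)]
    · rw [if_neg h]
      by_cases h' : j ≤ i.val <;> simp [h', ha i]
  have hzero : ∀ j, r < j → c j = 0 := by
    intro j hj
    apply Finset.sum_eq_zero
    intro i _
    have hni : ¬ j ≤ i.val := by have := i.isLt; omega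
    rw [if_neg hni]
  -- a from c differences
  have adiff : ∀ i₀ : Fin (r+1), 1 ≤ i₀.val → a i₀ = c i₀.val - c (i₀.val + 1) := by
    intro i₀ h1
    rw [hc]
    simp only
    rw [← Finset.sum_sub_distrib]
    have hterm : ∀ i ∈ Finset.univ, ((if i₀.val ≤ i.val then a i else 0) -
        (if i₀.val + 1 ≤ i.val then a i else 0)) = if i = i₀ then a i else 0 := by
      intro i _
      by_cases h : i = i₀
      · subst h; simp
      · have hne : i.val ≠ i₀.val := fun hh => h (Fin.ext hh)
        by_cases h2 : i₀.val + 1 ≤ i.val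
        · rw [if_pos (by omega), if_pos h2, if_neg h]; ring
        · rw [if_neg (by omega), if_neg (by omega), if_neg h]; ring
    rw [Finset.sum_congr rfl hterm, Finset.sum_ite_eq']
    simp
  -- a 0 in terms of N 0 and c
  have ha0 : a 0 = N 0 - (c 1 + c 2 + c 3) := by
    have e1 : c 1 + c 2 + c 3 = ∑ i : Fin (r+1),
        ((if 1 ≤ i.val then a i else 0) + (if 2 ≤ i.val then a i else 0) +
         (if 3 ≤ i.val then a i else 0)) := by
      rw [hc]; simp only [Finset.sum_add_distrib]
    rw [hNval 0, e1, ← Finset.sum_sub_distrib]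
    have hterm : ∀ i ∈ Finset.univ, (a i * hstd r i 0 -
        ((if 1 ≤ i.val then a i else 0) + (if 2 ≤ i.val then a i else 0) +
         (if 3 ≤ i.val then a i else 0))) = if i = 0 then a i else 0 := by
      intro i _
      have hcoef : hstd r i 0 = max 1 (min (i.val : ℤ) 3) := by simp [hstd]
      by_cases h0 : i = 0
      · subst h0; simp [hcoef]
      · have hval : 1 ≤ i.val := by
          rcases Nat.eq_zero_or_pos i.val with h | h
          · exact absurd (Fin.ext (by simpa using h)) h0
          · exact h
        rw [if_neg h0, if_pos hval, hcoef]
        by_cases h2 : 2 ≤ i.val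
        · by_cases h3 : 3 ≤ i.val
          · rw [if_pos h2, if_pos h3]
            have hm : max 1 (min (i.val:ℤ) 3) = 3 := by
              have : (3:ℤ) ≤ (i.val:ℤ) := by exact_mod_cast h3
              omega
            rw [hm]; ring
          · have hv : i.val = 2 := by omega
            rw [if_pos h2, if_neg h3, hv]
            norm_num
            try ring
        · have hv : i.val = 1 := by omega
          rw [if_neg h2, if_neg (by omega), hv]
          norm_num
          try ring
    rw [Finset.sum_congr rfl hterm, Finset.sum_ite_eq']
    simp
  -- N 0 ≥ 1
  have hn1 : 1 ≤ N 0 := by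
    have hsle : ∑ i : Fin (r+1), a i ≤ N 0 := by
      rw [hNval 0]
      apply Finset.sum_le_sum
      intro i _
      have hcoef : (1:ℤ) ≤ hstd r i 0 := by simp [hstd]
      nlinarith [ha i]
    by_contra h
    push_neg at h
    have hs0 : ∑ i : Fin (r+1), a i = 0 := by
      have h0 : 0 ≤ ∑ i : Fin (r+1), a i := Finset.sum_nonneg (fun i _ => ha i)
      omega
    have hall : ∀ i : Fin (r+1), a i = 0 := fun i =>
      (Finset.sum_eq_zero_iff_of_nonneg (fun i _ => ha i)).1 hs0 i (Finset.mem_univ i)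
    apply hN0
    rw [hN]
    funext j
    simp [hall]
  -- B10 expansions
  have hB : ∀ y : Fin (r+1) → ℤ, B10 r N y
      = N 0 * y 0 + ∑ i : Fin r, -(N i.succ * y i.succ) := by
    intro y
    rw [B10, Fin.sum_univ_succ]
    simp [Fin.succ_ne_zero]
  have hcsucc : ∀ i : Fin r, N i.succ = -(c (i.val + 1)) := by
    intro i
    have := hNj i.succ (by simp [Fin.val_succ])
    rwa [Fin.val_succ] at this
  have hSq : ∑ j ∈ Finset.range r, (c (j+1))^2 = (N 0)^2 := by
    have hB2 := hB N
    rw [hNN] at hB2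
    have hconv : ∑ i : Fin r, -(N i.succ * N i.succ)
        = ∑ j ∈ Finset.range r, -((c (j+1))^2) := by
      rw [← Fin.sum_univ_eq_sum_range (fun j => -((c (j+1))^2)) r]
      apply Finset.sum_congr rfl
      intro i _
      rw [hcsucc i]; ring
    rw [hconv, Finset.sum_neg_distrib] at hB2
    linarith [hB2, sq_nonneg (N 0), sq_abs (N 0)]
  have hSc : ∑ j ∈ Finset.range r, c (j+1) = 3 * N 0 := by
    have hB2 := hB (hstd r (Fin.last r))
    rw [hNK] at hB2
    have hK0 : hstd r (Fin.last r) 0 = 3 := by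
      simp only [hstd]
      rw [if_pos (by simp)]
      simp only [Fin.val_last]
      have : (r:ℤ) ⊓ 3 = 3 := by
        have : (3:ℤ) ≤ (r:ℤ) := by exact_mod_cast hr
        omega
      omega
    have hconv : ∑ i : Fin r, -(N i.succ * hstd r (Fin.last r) i.succ)
        = ∑ j ∈ Finset.range r, -(c (j+1)) := by
      rw [← Fin.sum_univ_eq_sum_range (fun j => -(c (j+1))) r]
      apply Finset.sum_congr rfl
      intro i _
      have hKi : hstd r (Fin.last r) i.succ = -1 := by
        simp only [hstd]
        rw [if_neg (by simp [Fin.val_succ]), if_pos]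
        simp [Fin.val_succ, Fin.val_last]
      rw [hcsucc i, hKi]; ring
    rw [hconv, Finset.sum_neg_distrib, hK0] at hB2
    linarith [hB2]
  have h123 : c 1 + c 2 + c 3 ≤ N 0 := by
    have := ha 0
    omega
  obtain ⟨hr9, hmid, htail⟩ := core10 r (N 0) c hr hn1 hpos hmono hzero h123 hSc hSq
  refine ⟨hr9, ?_, ?_⟩
  · intro i hi9
    rw [adiff i (by omega)]
    rw [hi9]
    have h9 := hmid 9 (by omega) (by omega)
    have h10 : c (9+1) = 0 := htail 10 (by omega)
    omega
  · intro i hi9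
    rcases Nat.eq_zero_or_pos i.val with h0 | h1
    · have hi0 : i = 0 := Fin.ext (by simpa using h0)
      rw [hi0, ha0]
      have e1 := hmid 1 (by omega) (by omega)
      have e2 := hmid 2 (by omega) (by omega)
      have e3 := hmid 3 (by omega) (by omega)
      omega
    · rw [adiff i h1]
      by_cases hle : i.val ≤ 9
      · have hi8 : i.val ≤ 8 := by omega
        have e1 := hmid i.val h1 (by omega)
        have e2 := hmid (i.val + 1) (by omega) (by omega)
        omega
      · have e1 := htail i.val (by omega)
        have e2 := htail (i.val + 1) (by omega)
        omega
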